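/- Let ε = δ₀/8, θ = 3ε, α = 5ε, β = 7ε, and B the Banach space of continuous h on GL_d(R)×P(R^d) with ‖h‖_B = |h|_θ + k_{ε,α}(h) + k'_{ε,β}(h) < ∞. Then for every h ∈ B and every t ∈ R, e^{itρ}h ∈ B and ‖e^{itρ}h‖_B ≤ ‖h‖_B + 4|t|^ε |h|_θ. -/

import Mathlib

open scoped LinearAlgebra.Projectivization RealInnerProductSpace ENNReal
open MeasureTheory

noncomputable section

abbrev E (d : ℕ) := EuclideanSpace ℝ (Fin d)
abbrev Gd (d : ℕ) := (E d →L[ℝ] E d)ˣ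

/-- `N(g) = max(‖g‖, ‖g⁻¹‖)`. -/
def Nnorm {d : ℕ} (g : Gd d) : ℝ :=
  max ‖(g : E d →L[ℝ] E d)‖ ‖((g⁻¹ : Gd d) : E d →L[ℝ] E d)‖

instance (d : ℕ) : TopologicalSpace (ℙ ℝ (E d)) := instTopologicalSpaceQuotient

/-- Angular distance between the directions of nonzero vectors `x, y`:
`d(x̄, ȳ) = ‖x ∧ y‖/(‖x‖‖y‖) = √(‖x‖²‖y‖² − ⟨x,y⟩²)/(‖x‖‖y‖)`. -/
def angDist {d : ℕ} (x y : E d) : ℝ :=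
  Real.sqrt (‖x‖ ^ 2 * ‖y‖ ^ 2 - ⟪x, y⟫ ^ 2) / (‖x‖ * ‖y‖)

/-- Angular distance on projective space, via representatives (it is
scale-invariant). -/
def dP {d : ℕ} (x y : ℙ ℝ (E d)) : ℝ := angDist x.rep y.rep

/-- The norm cocycle `ρ(g, v̄) = log (‖gv‖/‖v‖)`. -/
def ρ {d : ℕ} (g : Gd d) (x : ℙ ℝ (E d)) : ℝ :=
  Real.log (‖(g : E d →L[ℝ] E d) x.rep‖ / ‖x.rep‖)

/-- The weighted sup-seminorm `|h|_θ = sup_{(g,ū)} |h(g,ū)| / N(g)^θ`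
(with values in `[0,∞]`). -/
def nθ {d : ℕ} (θ : ℝ) (h : Gd d → ℙ ℝ (E d) → ℂ) : ℝ≥0∞ :=
  ⨆ (g : Gd d) (x : ℙ ℝ (E d)),
    ENNReal.ofReal (‖h g x‖ / Nnorm g ^ θ)

/-- The weighted Hölder seminorm in the projective variable:
`k_{ε,α}(h) = sup_{g, ū ≠ v̄} |h(g,ū)−h(g,v̄)| / (d(ū,v̄)^ε N(g)^α)`. -/
def kP {d : ℕ} (ε α : ℝ) (h : Gd d → ℙ ℝ (E d) → ℂ) : ℝ≥0∞ :=
  ⨆ (g : Gd d) (x : ℙ ℝ (E d)) (y : ℙ ℝ (E d)) (_ : x ≠ y),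
    ENNReal.ofReal (‖h g x - h g y‖ / (dP x y ^ ε * Nnorm g ^ α))

/-- The weighted Hölder seminorm in the matrix variable:
`k'_{ε,β}(h) = sup_{g ≠ g', ū} |h(g,ū)−h(g',ū)| / (‖g−g'‖^ε N(g)^β N(g')^β)`. -/
def kG {d : ℕ} (ε β : ℝ) (h : Gd d → ℙ ℝ (E d) → ℂ) : ℝ≥0∞ :=
  ⨆ (g : Gd d) (g' : Gd d) (_ : g ≠ g') (x : ℙ ℝ (E d)),
    ENNReal.ofReal (‖h g x - h g' x‖ /
      (‖(g : E d →L[ℝ] E d) - (g' : E d →L[ℝ] E d)‖ ^ ε * Nnorm g ^ β * Nnorm g' ^ β))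

/-- The Banach norm `‖h‖_B = |h|_θ + k_{ε,α}(h) + k'_{ε,β}(h)` (in `[0,∞]`). -/
def normB {d : ℕ} (θ ε α β : ℝ) (h : Gd d → ℙ ℝ (E d) → ℂ) : ℝ≥0∞ :=
  nθ θ h + kP ε α h + kG ε β h

lemma abs_exp_I_sub_one (c : ℝ) :
    ‖Complex.exp (Complex.I * c) - 1‖ ≤ |c| := by
  have h1 : Complex.exp (Complex.I * c) - 1 =
      Complex.ofReal (Real.cos c - 1) + Complex.ofReal (Real.sin c) * Complex.I := by
    rw [mul_comm, Complex.exp_mul_I]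
    push_cast
    ring_nf
  have h2 : ‖Complex.exp (Complex.I * c) - 1‖ ^ 2 = 2 - 2 * Real.cos c := by
    rw [Complex.sq_norm, h1, Complex.normSq_add_mul_I]
    nlinarith [Real.sin_sq_add_cos_sq c]
  have h3 : ‖Complex.exp (Complex.I * c) - 1‖ ^ 2 ≤ |c| ^ 2 := by
    rw [h2]
    have := Real.one_sub_sq_div_two_le_cos (x := c)
    rw [sq_abs]; nlinarith
  nlinarith [norm_nonneg (Complex.exp (Complex.I * c) - 1), abs_nonneg c]

lemma abs_exp_I_sub (a b : ℝ) :
    ‖Complex.exp (Complex.I * a) - Complex.exp (Complex.I * b)‖ ≤ min |a - b| 2 := by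
  apply le_min
  · have e1 : Complex.I * (a : ℂ) = Complex.I * b + Complex.I * ((a - b : ℝ) : ℂ) := by
      push_cast; ring
    have this1 : Complex.exp (Complex.I * a) - Complex.exp (Complex.I * b) =
        Complex.exp (Complex.I * b) * (Complex.exp (Complex.I * ((a - b : ℝ) : ℂ)) - 1) := by
      rw [e1, Complex.exp_add]; ring
    rw [this1, norm_mul]
    have hb : ‖Complex.exp (Complex.I * b)‖ = 1 := by simp [Complex.norm_exp]
    rw [hb, one_mul]
    exact abs_exp_I_sub_one (a - b)
  · calc ‖Complex.exp (Complex.I * a) - Complex.exp (Complex.I * b)‖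
        ≤ ‖Complex.exp (Complex.I * a)‖ + ‖Complex.exp (Complex.I * b)‖ :=
          norm_sub_le _ _
      _ ≤ 2 := by rw [Complex.norm_exp, Complex.norm_exp]; simp; norm_num

lemma min_le_two_rpow (c ε : ℝ) (hc : 0 ≤ c) (hε : 0 < ε) (hε1 : ε ≤ 1) :
    min c 2 ≤ 2 ^ (1 - ε) * c ^ ε := by
  rcases le_total c 2 with hc2 | hc2
  · rw [min_eq_left hc2]
    rcases eq_or_lt_of_le hc with hc0 | hc0
    · rw [← hc0, Real.zero_rpow hε.ne', mul_zero]
    · have h1 : c ^ (1 - ε) ≤ 2 ^ (1 - ε) :=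
        Real.rpow_le_rpow hc hc2 (by linarith)
      have h2 : (0:ℝ) ≤ c ^ ε := Real.rpow_nonneg hc _
      calc c = c ^ ε * c ^ (1 - ε) := by rw [← Real.rpow_add hc0]; norm_num
        _ ≤ c ^ ε * 2 ^ (1 - ε) := mul_le_mul_of_nonneg_left h1 h2
        _ = 2 ^ (1 - ε) * c ^ ε := mul_comm _ _
  · rw [min_eq_right hc2]
    calc (2:ℝ) = 2 ^ (1 - ε) * 2 ^ ε := by rw [← Real.rpow_add (by norm_num)]; norm_num
      _ ≤ 2 ^ (1 - ε) * c ^ ε :=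
        mul_le_mul_of_nonneg_left (Real.rpow_le_rpow (by norm_num) hc2 hε.le)
          (Real.rpow_nonneg (by norm_num) _)

lemma abs_log_sub_log {a b : ℝ} (ha : 0 < a) (hb : 0 < b) :
    |Real.log a - Real.log b| ≤ |a - b| / min a b := by
  have key : ∀ u v : ℝ, 0 < u → 0 < v → v ≤ u →
      Real.log u - Real.log v ≤ (u - v) / v := by
    intro u v hu hv huv
    rw [← Real.log_div hu.ne' hv.ne']
    have h1 := Real.log_le_sub_one_of_pos (show 0 < u / v from div_pos hu hv)
    have h2 : u / v - 1 = (u - v) / v := by field_simp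
    linarith
  rcases le_total b a with hba | hba
  · have hl : Real.log b ≤ Real.log a := Real.log_le_log hb hba
    rw [min_eq_right hba, abs_of_nonneg (show (0:ℝ) ≤ Real.log a - Real.log b by linarith),
      abs_of_nonneg (show (0:ℝ) ≤ a - b by linarith)]
    exact key a b ha hb hba
  · have hl : Real.log a ≤ Real.log b := Real.log_le_log ha hba
    rw [min_eq_left hba, abs_of_nonpos (show Real.log a - Real.log b ≤ 0 by linarith),
      abs_of_nonpos (show a - b ≤ 0 by linarith), neg_sub, neg_sub]
    exact key b a hb ha hba
section Aux
variable {d : ℕ}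

lemma Nnorm_nonneg (g : Gd d) : 0 ≤ Nnorm g :=
  le_trans (norm_nonneg _) (le_max_left _ _)

lemma norm_le_Nnorm (g : Gd d) : ‖(g : E d →L[ℝ] E d)‖ ≤ Nnorm g := le_max_left _ _

lemma norm_inv_le_Nnorm (g : Gd d) : ‖((g⁻¹ : Gd d) : E d →L[ℝ] E d)‖ ≤ Nnorm g :=
  le_max_right _ _

lemma norm_unit_apply_pos (g : Gd d) {u : E d} (hu : u ≠ 0) :
    0 < ‖(g : E d →L[ℝ] E d) u‖ := by
  rw [norm_pos_iff]
  intro h0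
  apply hu
  have h1 : u = (((g⁻¹ : Gd d) : E d →L[ℝ] E d) * (g : E d →L[ℝ] E d)) u := by
    rw [Units.inv_mul]; simp
  rw [h1, ContinuousLinearMap.mul_apply, h0, map_zero]

lemma one_le_Nnorm (g : Gd d) {u : E d} (hu : u ≠ 0) : 1 ≤ Nnorm g := by
  have : Nontrivial (E d) := nontrivial_of_ne u 0 hu
  have h1 : ‖(1 : E d →L[ℝ] E d)‖ = 1 := norm_one
  have h2 : ‖(1 : E d →L[ℝ] E d)‖ ≤ ‖((g⁻¹ : Gd d) : E d →L[ℝ] E d)‖ * ‖(g : E d →L[ℝ] E d)‖ := by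
    rw [← Units.inv_mul g]
    exact norm_mul_le _ _
  nlinarith [norm_le_Nnorm g, norm_inv_le_Nnorm g, Nnorm_nonneg g, norm_nonneg (g : E d →L[ℝ] E d),
    norm_nonneg ((g⁻¹ : Gd d) : E d →L[ℝ] E d)]

lemma one_le_inv_mul_apply (g : Gd d) {u : E d} (hu : ‖u‖ = 1) :
    1 ≤ ‖((g⁻¹ : Gd d) : E d →L[ℝ] E d)‖ * ‖(g : E d →L[ℝ] E d) u‖ := by
  have h1 : u = (((g⁻¹ : Gd d) : E d →L[ℝ] E d) * (g : E d →L[ℝ] E d)) u := by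
    rw [Units.inv_mul]; simp
  calc (1:ℝ) = ‖u‖ := hu.symm
    _ = ‖((g⁻¹ : Gd d) : E d →L[ℝ] E d) ((g : E d →L[ℝ] E d) u)‖ := by
        rw [← ContinuousLinearMap.mul_apply, ← h1]
    _ ≤ _ := ContinuousLinearMap.le_opNorm _ _

lemma angDist_nonneg (w w' : E d) : 0 ≤ angDist w w' := by
  unfold angDist; positivity

lemma angDist_smul_smul {c c' : ℝ} (hc : 0 < c) (hc' : 0 < c') (w w' : E d) :
    angDist (c • w) (c' • w') = angDist w w' := by
  unfold angDist
  have h1 : ‖c • w‖ = c * ‖w‖ := by rw [norm_smul, Real.norm_eq_abs, abs_of_pos hc]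
  have h1' : ‖c' • w'‖ = c' * ‖w'‖ := by rw [norm_smul, Real.norm_eq_abs, abs_of_pos hc']
  have h2 : ⟪c • w, c' • w'⟫ = c * c' * ⟪w, w'⟫ := by
    rw [real_inner_smul_left, real_inner_smul_right]; ring
  rw [h1, h1', h2]
  have h3 : (c * ‖w‖) ^ 2 * (c' * ‖w'‖) ^ 2 - (c * c' * ⟪w, w'⟫) ^ 2
      = (c * c') ^ 2 * (‖w‖ ^ 2 * ‖w'‖ ^ 2 - ⟪w, w'⟫ ^ 2) := by ring
  rw [h3, Real.sqrt_mul (sq_nonneg _), Real.sqrt_sq (by positivity),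
    show c * ‖w‖ * (c' * ‖w'‖) = c * c' * (‖w‖ * ‖w'‖) by ring]
  exact mul_div_mul_left _ _ (by positivity)

lemma ρ_eq_log (g : Gd d) (x : ℙ ℝ (E d)) :
    ρ g x = Real.log ‖(g : E d →L[ℝ] E d) (‖x.rep‖⁻¹ • x.rep)‖ := by
  unfold ρ
  rw [_root_.map_smul, norm_smul, Real.norm_eq_abs, abs_inv, abs_norm, div_eq_inv_mul]

end Aux
section Core
variable {d : ℕ}

lemma log_norm_sub_bound (g : Gd d) {u v : E d} (hu : ‖u‖ = 1) (hv : ‖v‖ = 1) :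
    |Real.log ‖(g : E d →L[ℝ] E d) u‖ - Real.log ‖(g : E d →L[ℝ] E d) v‖|
      ≤ 2 * (Nnorm g * Nnorm g) * angDist u v := by
  set G := (g : E d →L[ℝ] E d) with hG
  have hu0 : u ≠ 0 := by intro h; rw [h, norm_zero] at hu; norm_num at hu
  have hv0 : v ≠ 0 := by intro h; rw [h, norm_zero] at hv; norm_num at hv
  set c := ⟪u, v⟫ with hcdef
  have hc : |c| ≤ 1 := by
    have := abs_real_inner_le_norm u v
    rwa [hu, hv, one_mul] at this
  set s : ℝ := if 0 ≤ c then 1 else -1 with hsdef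
  have hs : s = 1 ∨ s = -1 := by rw [hsdef]; split <;> simp
  have hs0 : |s| = 1 := by rcases hs with h | h <;> rw [h] <;> norm_num
  have hsv_norm : ‖s • v‖ = 1 := by rw [norm_smul, Real.norm_eq_abs, hs0, hv, one_mul]
  have hinner : ⟪u, s • v⟫ = |c| := by
    rw [real_inner_smul_right, ← hcdef, hsdef]
    split
    · rw [abs_of_nonneg ‹_›]; ring
    · rw [abs_of_neg (lt_of_not_ge ‹_›)]; ring
  have hGsv : ‖G (s • v)‖ = ‖G v‖ := by
    rw [_root_.map_smul, norm_smul, Real.norm_eq_abs, hs0, one_mul]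
  have hang : angDist u v = Real.sqrt (1 - c ^ 2) := by
    unfold angDist; rw [hu, hv, ← hcdef]; norm_num
  have hang_nonneg : 0 ≤ angDist u v := angDist_nonneg u v
  have hsq : Real.sqrt (1 - c ^ 2) ^ 2 = 1 - c ^ 2 := by
    rw [Real.sq_sqrt] <;> nlinarith [sq_abs c, hc, abs_nonneg c]
  have hle : ‖u - s • v‖ ≤ 2 * angDist u v := by
    have hd2 : ‖u - s • v‖ ^ 2 = 2 - 2 * |c| := by
      rw [norm_sub_sq_real, hu, hsv_norm, hinner]; ring
    have h1 : ‖u - s • v‖ ^ 2 ≤ (2 * angDist u v) ^ 2 := by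
      rw [hd2, hang, mul_pow, hsq]
      nlinarith [sq_abs c, abs_nonneg c]
    nlinarith [norm_nonneg (u - s • v), hang_nonneg]
  have hGu : 0 < ‖G u‖ := norm_unit_apply_pos g hu0
  have hGv : 0 < ‖G v‖ := norm_unit_apply_pos g hv0
  have hlog := abs_log_sub_log hGu hGv
  have hnum : |‖G u‖ - ‖G v‖| ≤ ‖G‖ * ‖u - s • v‖ := by
    rw [← hGsv]
    calc |‖G u‖ - ‖G (s • v)‖| ≤ ‖G u - G (s • v)‖ := abs_norm_sub_norm_le _ _
      _ = ‖G (u - s • v)‖ := by rw [map_sub]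
      _ ≤ ‖G‖ * ‖u - s • v‖ := G.le_opNorm _
  have hmin_pos : 0 < min ‖G u‖ ‖G v‖ := lt_min hGu hGv
  have hinvn : 0 ≤ ‖((g⁻¹ : Gd d) : E d →L[ℝ] E d)‖ := norm_nonneg _
  have h1min : 1 ≤ ‖((g⁻¹ : Gd d) : E d →L[ℝ] E d)‖ * min ‖G u‖ ‖G v‖ := by
    rcases min_cases ‖G u‖ ‖G v‖ with ⟨heq, _⟩ | ⟨heq, _⟩ <;> rw [heq]
    · exact one_le_inv_mul_apply g hu
    · exact one_le_inv_mul_apply g hv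
  have hdiv : |‖G u‖ - ‖G v‖| / min ‖G u‖ ‖G v‖
      ≤ ‖G‖ * ‖u - s • v‖ * ‖((g⁻¹ : Gd d) : E d →L[ℝ] E d)‖ := by
    rw [div_le_iff₀ hmin_pos]
    have hGn : 0 ≤ ‖G‖ := norm_nonneg _
    have huvn : 0 ≤ ‖u - s • v‖ := norm_nonneg _
    nlinarith [hnum, mul_le_mul_of_nonneg_left h1min (mul_nonneg hGn huvn)]
  have hfinal : ‖G‖ * ‖u - s • v‖ * ‖((g⁻¹ : Gd d) : E d →L[ℝ] E d)‖
      ≤ 2 * (Nnorm g * Nnorm g) * angDist u v := by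
    have h2 := norm_le_Nnorm g
    have h3 := norm_inv_le_Nnorm g
    have h4 := Nnorm_nonneg g
    have hGn : 0 ≤ ‖G‖ := norm_nonneg _
    have huvn : 0 ≤ ‖u - s • v‖ := norm_nonneg _
    calc ‖G‖ * ‖u - s • v‖ * ‖((g⁻¹ : Gd d) : E d →L[ℝ] E d)‖
        ≤ Nnorm g * ‖u - s • v‖ * Nnorm g :=
          mul_le_mul (mul_le_mul h2 le_rfl huvn h4) h3 hinvn (mul_nonneg h4 huvn)
      _ ≤ Nnorm g * (2 * angDist u v) * Nnorm g :=
          mul_le_mul_of_nonneg_right (mul_le_mul_of_nonneg_left hle h4) h4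
      _ = 2 * (Nnorm g * Nnorm g) * angDist u v := by ring
  calc |Real.log ‖G u‖ - Real.log ‖G v‖| ≤ |‖G u‖ - ‖G v‖| / min ‖G u‖ ‖G v‖ := hlog
    _ ≤ _ := hdiv.trans hfinal

end Core

section Rho
variable {d : ℕ}

lemma rho_dP_bound (g : Gd d) (x y : ℙ ℝ (E d)) :
    |ρ g x - ρ g y| ≤ 2 * (Nnorm g * Nnorm g) * dP x y := by
  have hx0 := Projectivization.rep_nonzero x
  have hy0 := Projectivization.rep_nonzero y
  have hxn : 0 < ‖x.rep‖ := norm_pos_iff.mpr hx0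
  have hyn : 0 < ‖y.rep‖ := norm_pos_iff.mpr hy0
  have hu : ‖(‖x.rep‖⁻¹ • x.rep : E d)‖ = 1 := norm_smul_inv_norm hx0
  have hv : ‖(‖y.rep‖⁻¹ • y.rep : E d)‖ = 1 := norm_smul_inv_norm hy0
  have hdp : dP x y = angDist (‖x.rep‖⁻¹ • x.rep) (‖y.rep‖⁻¹ • y.rep) := by
    unfold dP
    rw [angDist_smul_smul (inv_pos.mpr hxn) (inv_pos.mpr hyn)]
  rw [ρ_eq_log g x, ρ_eq_log g y, hdp]
  exact log_norm_sub_bound g hu hv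

lemma rho_group_bound (g g' : Gd d) (x : ℙ ℝ (E d)) :
    |ρ g x - ρ g' x| ≤ ‖(g : E d →L[ℝ] E d) - (g' : E d →L[ℝ] E d)‖
      * (Nnorm g * Nnorm g') := by
  have hx0 := Projectivization.rep_nonzero x
  have hxn : 0 < ‖x.rep‖ := norm_pos_iff.mpr hx0
  set u : E d := ‖x.rep‖⁻¹ • x.rep with hudef
  have hu : ‖u‖ = 1 := norm_smul_inv_norm hx0
  have hu0 : u ≠ 0 := by intro h; rw [h, norm_zero] at hu; norm_num at hu
  set G := (g : E d →L[ℝ] E d)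
  set G' := (g' : E d →L[ℝ] E d)
  have hGu : 0 < ‖G u‖ := norm_unit_apply_pos g hu0
  have hG'u : 0 < ‖G' u‖ := norm_unit_apply_pos g' hu0
  rw [ρ_eq_log g x, ρ_eq_log g' x]
  have hlog := abs_log_sub_log hGu hG'u
  have hnum : |‖G u‖ - ‖G' u‖| ≤ ‖G - G'‖ := by
    calc |‖G u‖ - ‖G' u‖| ≤ ‖G u - G' u‖ := abs_norm_sub_norm_le _ _
      _ = ‖(G - G') u‖ := by rw [ContinuousLinearMap.sub_apply]
      _ ≤ ‖G - G'‖ * ‖u‖ := (G - G').le_opNorm u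
      _ = ‖G - G'‖ := by rw [hu, mul_one]
  have hNg := one_le_Nnorm g hu0
  have hNg' := one_le_Nnorm g' hu0
  have h1min : 1 ≤ Nnorm g * Nnorm g' * min ‖G u‖ ‖G' u‖ := by
    rcases min_cases ‖G u‖ ‖G' u‖ with ⟨heq, _⟩ | ⟨heq, _⟩ <;> rw [heq]
    · have h1 := one_le_inv_mul_apply g hu
      have h2 := norm_inv_le_Nnorm g
      nlinarith [mul_le_mul_of_nonneg_right h2 hGu.le,
        mul_le_mul_of_nonneg_right hNg' (mul_nonneg (Nnorm_nonneg g) hGu.le)]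
    · have h1 := one_le_inv_mul_apply g' hu
      have h2 := norm_inv_le_Nnorm g'
      nlinarith [mul_le_mul_of_nonneg_right h2 hG'u.le,
        mul_le_mul_of_nonneg_right hNg (mul_nonneg (Nnorm_nonneg g') hG'u.le)]
  have hmin_pos : 0 < min ‖G u‖ ‖G' u‖ := lt_min hGu hG'u
  calc |Real.log ‖G u‖ - Real.log ‖G' u‖| ≤ |‖G u‖ - ‖G' u‖| / min ‖G u‖ ‖G' u‖ := hlog
    _ ≤ ‖G - G'‖ * (Nnorm g * Nnorm g') := by
        rw [div_le_iff₀ hmin_pos]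
        nlinarith [hnum, abs_nonneg (‖G u‖ - ‖G' u‖),
          mul_le_mul_of_nonneg_left h1min (abs_nonneg (‖G u‖ - ‖G' u‖))]

end Rho

section Sup
variable {d : ℕ}

lemma abs_exp_mul_sub (ε : ℝ) (hε : 0 < ε) (hε1 : ε ≤ 1) (a b : ℝ) (z w : ℂ) :
    ‖Complex.exp (Complex.I * a) * z - Complex.exp (Complex.I * b) * w‖
      ≤ ‖z - w‖ + 2 ^ (1 - ε) * |a - b| ^ ε * ‖w‖ := by
  have key : Complex.exp (Complex.I * a) * z - Complex.exp (Complex.I * b) * w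
      = Complex.exp (Complex.I * a) * (z - w)
        + (Complex.exp (Complex.I * a) - Complex.exp (Complex.I * b)) * w := by ring
  calc ‖Complex.exp (Complex.I * a) * z - Complex.exp (Complex.I * b) * w‖
      ≤ ‖Complex.exp (Complex.I * a) * (z - w)‖
        + ‖(Complex.exp (Complex.I * a) - Complex.exp (Complex.I * b)) * w‖ := by
        rw [key]; exact norm_add_le _ _
    _ ≤ ‖z - w‖ + 2 ^ (1 - ε) * |a - b| ^ ε * ‖w‖ := by
        rw [norm_mul, norm_mul]
        have h1 : ‖Complex.exp (Complex.I * a)‖ = 1 := by simp [Complex.norm_exp]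
        rw [h1, one_mul]
        gcongr ?_ + ?_ * _
        · exact le_rfl
        · exact (abs_exp_I_sub a b).trans (min_le_two_rpow _ ε (abs_nonneg _) hε hε1)

lemma mul_self_rpow {N : ℝ} (hN : 0 < N) (ε : ℝ) : (N * N) ^ ε = N ^ (2 * ε) := by
  rw [Real.mul_rpow hN.le hN.le, ← Real.rpow_add hN]; ring_nf

lemma nθ_exp (θ t : ℝ) (h : Gd d → ℙ ℝ (E d) → ℂ) :
    nθ θ (fun g x => Complex.exp (Complex.I * (t * ρ g x)) * h g x) = nθ θ h := by
  unfold nθ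
  refine iSup_congr fun g => iSup_congr fun x => ?_
  congr 2
  rw [norm_mul]
  simp [Complex.norm_exp]

end Sup

lemma abs_exp_mul_sub' (ε : ℝ) (hε : 0 < ε) (hε1 : ε ≤ 1) (t ra rb : ℝ) (z w : ℂ) :
    ‖Complex.exp (Complex.I * ((t:ℂ) * (ra:ℂ))) * z
      - Complex.exp (Complex.I * ((t:ℂ) * (rb:ℂ))) * w‖
      ≤ ‖z - w‖ + 2 ^ (1 - ε) * |t * ra - t * rb| ^ ε * ‖w‖ := by
  have e1 : ((t:ℂ) * (ra:ℂ)) = ((t * ra : ℝ) : ℂ) := by push_cast; ring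
  have e2 : ((t:ℂ) * (rb:ℂ)) = ((t * rb : ℝ) : ℂ) := by push_cast; ring
  rw [e1, e2]; exact abs_exp_mul_sub ε hε hε1 _ _ _ _

section KPbound
variable {d : ℕ}

set_option maxHeartbeats 1000000 in
lemma kP_exp_le (ε θ α t : ℝ) (hε : 0 < ε) (hε1 : ε ≤ 1)
    (hθ : θ = 3 * ε) (hα : α = 5 * ε) (h : Gd d → ℙ ℝ (E d) → ℂ) :
    kP ε α (fun g x => Complex.exp (Complex.I * (t * ρ g x)) * h g x)
      ≤ kP ε α h + ENNReal.ofReal (2 * |t| ^ ε) * nθ θ h := by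
  refine iSup_le fun g => iSup_le fun x => iSup_le fun y => iSup_le fun hxy => ?_
  have hx0 := Projectivization.rep_nonzero x
  have hN1 : 1 ≤ Nnorm g := one_le_Nnorm g hx0
  have hN0 : 0 < Nnorm g := lt_of_lt_of_le one_pos hN1
  have hdnn : 0 ≤ dP x y := angDist_nonneg _ _
  rcases eq_or_lt_of_le hdnn with hd0 | hd0
  · have hz : dP x y ^ ε = 0 := by rw [← hd0, Real.zero_rpow hε.ne']
    rw [hz, zero_mul, div_zero, ENNReal.ofReal_zero]
    exact zero_le
  -- main case
  set N := Nnorm g with hNdef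
  set A := ‖h g x - h g y‖ with hAdef
  set B := ‖h g y‖ with hBdef
  set D := dP x y ^ ε * N ^ α with hDdef
  have hD0 : 0 < D := mul_pos (Real.rpow_pos_of_pos hd0 _) (Real.rpow_pos_of_pos hN0 _)
  have habs : ‖Complex.exp (Complex.I * (t * ρ g x)) * h g x
          - Complex.exp (Complex.I * (t * ρ g y)) * h g y‖
      ≤ A + 2 ^ (1 - ε) * |t * ρ g x - t * ρ g y| ^ ε * B :=
    abs_exp_mul_sub' ε hε hε1 t (ρ g x) (ρ g y) _ _
  have hab : |t * ρ g x - t * ρ g y| = |t| * |ρ g x - ρ g y| := by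
    rw [show t * ρ g x - t * ρ g y = t * (ρ g x - ρ g y) by ring, abs_mul]
  have hΔ : |ρ g x - ρ g y| ≤ 2 * (N * N) * dP x y := rho_dP_bound g x y
  have hX : 2 ^ (1 - ε) * |t * ρ g x - t * ρ g y| ^ ε * B
      ≤ 2 * |t| ^ ε * (N ^ (2 * ε) * dP x y ^ ε) * B := by
    have h1 : |t * ρ g x - t * ρ g y| ^ ε ≤ |t| ^ ε * (2 * (N * N) * dP x y) ^ ε := by
      rw [hab, Real.mul_rpow (abs_nonneg _) (abs_nonneg _)]
      exact mul_le_mul_of_nonneg_left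
        (Real.rpow_le_rpow (abs_nonneg _) hΔ hε.le) (Real.rpow_nonneg (abs_nonneg _) _)
    have h2 : (2 * (N * N) * dP x y) ^ ε = 2 ^ ε * N ^ (2 * ε) * dP x y ^ ε := by
      rw [Real.mul_rpow (by positivity) hdnn, Real.mul_rpow (by norm_num) (by positivity),
        mul_self_rpow hN0]
    have h3 : (2:ℝ) ^ (1 - ε) * 2 ^ ε = 2 := by
      rw [← Real.rpow_add (by norm_num)]; norm_num
    calc 2 ^ (1 - ε) * |t * ρ g x - t * ρ g y| ^ ε * B
        ≤ 2 ^ (1 - ε) * (|t| ^ ε * (2 ^ ε * N ^ (2 * ε) * dP x y ^ ε)) * B := by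
          have h4 : |t * ρ g x - t * ρ g y| ^ ε
              ≤ |t| ^ ε * (2 ^ ε * N ^ (2 * ε) * dP x y ^ ε) := h1.trans_eq (by rw [h2])
          have hBnn : 0 ≤ B := hBdef ▸ norm_nonneg _
          exact mul_le_mul_of_nonneg_right
            (mul_le_mul_of_nonneg_left h4 (by positivity)) hBnn
      _ = 2 * |t| ^ ε * (N ^ (2 * ε) * dP x y ^ ε) * B := by
          rw [show (2:ℝ) ^ (1 - ε) * (|t| ^ ε * (2 ^ ε * N ^ (2 * ε) * dP x y ^ ε)) * B
            = (2 ^ (1 - ε) * 2 ^ ε) * |t| ^ ε * (N ^ (2 * ε) * dP x y ^ ε) * B by ring, h3]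
  -- the quotient of the extra term
  have hXD : 2 * |t| ^ ε * (N ^ (2 * ε) * dP x y ^ ε) * B / D
      = 2 * |t| ^ ε * (B / N ^ θ) := by
    have hsplit : N ^ α = N ^ (2 * ε) * N ^ θ := by
      rw [hα, hθ, ← Real.rpow_add hN0]; ring_nf
    rw [hDdef, hsplit]
    have hd : dP x y ^ ε ≠ 0 := (Real.rpow_pos_of_pos hd0 _).ne'
    have hn2 : N ^ (2 * ε) ≠ 0 := (Real.rpow_pos_of_pos hN0 _).ne'
    field_simp
  have R : ‖Complex.exp (Complex.I * (t * ρ g x)) * h g x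
        - Complex.exp (Complex.I * (t * ρ g y)) * h g y‖ / D
      ≤ A / D + 2 * |t| ^ ε * (B / N ^ θ) := by
    calc ‖Complex.exp (Complex.I * (t * ρ g x)) * h g x
          - Complex.exp (Complex.I * (t * ρ g y)) * h g y‖ / D
        ≤ (A + 2 * |t| ^ ε * (N ^ (2 * ε) * dP x y ^ ε) * B) / D := by
          gcongr
          exact habs.trans (add_le_add_right hX A)
      _ = A / D + 2 * |t| ^ ε * (N ^ (2 * ε) * dP x y ^ ε) * B / D := add_div _ _ _
      _ = A / D + 2 * |t| ^ ε * (B / N ^ θ) := by rw [hXD]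
  calc ENNReal.ofReal (‖Complex.exp (Complex.I * (t * ρ g x)) * h g x
        - Complex.exp (Complex.I * (t * ρ g y)) * h g y‖ / D)
      ≤ ENNReal.ofReal (A / D + 2 * |t| ^ ε * (B / N ^ θ)) := ENNReal.ofReal_le_ofReal R
    _ = ENNReal.ofReal (A / D) + ENNReal.ofReal (2 * |t| ^ ε * (B / N ^ θ)) :=
        ENNReal.ofReal_add (by positivity) (by positivity)
    _ ≤ kP ε α h + ENNReal.ofReal (2 * |t| ^ ε) * nθ θ h := by
        gcongr
        · exact le_iSup_of_le g (le_iSup_of_le x (le_iSup_of_le y (le_iSup_of_le hxy le_rfl)))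
        · rw [ENNReal.ofReal_mul (by positivity)]
          gcongr
          exact le_iSup_of_le g (le_iSup_of_le y le_rfl)

end KPbound

section KGbound
variable {d : ℕ}

set_option maxHeartbeats 1000000 in
lemma kG_exp_le (ε θ β t : ℝ) (hε : 0 < ε) (hε1 : ε ≤ 1)
    (hθ : θ = 3 * ε) (hβ : β = 7 * ε) (h : Gd d → ℙ ℝ (E d) → ℂ) :
    kG ε β (fun g x => Complex.exp (Complex.I * (t * ρ g x)) * h g x)
      ≤ kG ε β h + ENNReal.ofReal (2 * |t| ^ ε) * nθ θ h := by
  refine iSup_le fun g => iSup_le fun g' => iSup_le fun hgg => iSup_le fun x => ?_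
  have hx0 := Projectivization.rep_nonzero x
  have hN1 : 1 ≤ Nnorm g := one_le_Nnorm g hx0
  have hN1' : 1 ≤ Nnorm g' := one_le_Nnorm g' hx0
  have hN0 : 0 < Nnorm g := lt_of_lt_of_le one_pos hN1
  have hN0' : 0 < Nnorm g' := lt_of_lt_of_le one_pos hN1'
  have hne : (g : E d →L[ℝ] E d) - (g' : E d →L[ℝ] E d) ≠ 0 := by
    intro h0
    exact hgg (Units.ext (sub_eq_zero.mp h0))
  have hMn : 0 < ‖(g : E d →L[ℝ] E d) - (g' : E d →L[ℝ] E d)‖ := norm_pos_iff.mpr hne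
  set N := Nnorm g with hNdef
  set N' := Nnorm g' with hN'def
  set M := ‖(g : E d →L[ℝ] E d) - (g' : E d →L[ℝ] E d)‖ with hMdef
  set A := ‖h g x - h g' x‖ with hAdef
  set B := ‖h g' x‖ with hBdef
  have hAnn : 0 ≤ A := hAdef ▸ norm_nonneg _
  have hBnn : 0 ≤ B := hBdef ▸ norm_nonneg _
  set D := M ^ ε * N ^ β * N' ^ β with hDdef
  have hD0 : 0 < D := mul_pos (mul_pos (Real.rpow_pos_of_pos hMn _)
    (Real.rpow_pos_of_pos hN0 _)) (Real.rpow_pos_of_pos hN0' _)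
  have habs : ‖Complex.exp (Complex.I * (t * ρ g x)) * h g x
          - Complex.exp (Complex.I * (t * ρ g' x)) * h g' x‖
      ≤ A + 2 ^ (1 - ε) * |t * ρ g x - t * ρ g' x| ^ ε * B :=
    abs_exp_mul_sub' ε hε hε1 t (ρ g x) (ρ g' x) _ _
  have hΔ : |ρ g x - ρ g' x| ≤ M * (N * N') := rho_group_bound g g' x
  have hX : 2 ^ (1 - ε) * |t * ρ g x - t * ρ g' x| ^ ε * B
      ≤ 2 * |t| ^ ε * (M ^ ε * (N ^ ε * N' ^ ε)) * B := by
    have hab : |t * ρ g x - t * ρ g' x| = |t| * |ρ g x - ρ g' x| := by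
      rw [show t * ρ g x - t * ρ g' x = t * (ρ g x - ρ g' x) by ring, abs_mul]
    have h1 : |t * ρ g x - t * ρ g' x| ^ ε ≤ |t| ^ ε * (M * (N * N')) ^ ε := by
      rw [hab, Real.mul_rpow (abs_nonneg _) (abs_nonneg _)]
      exact mul_le_mul_of_nonneg_left
        (Real.rpow_le_rpow (abs_nonneg _) hΔ hε.le) (Real.rpow_nonneg (abs_nonneg _) _)
    have h2 : (M * (N * N')) ^ ε = M ^ ε * (N ^ ε * N' ^ ε) := by
      rw [Real.mul_rpow hMn.le (by positivity), Real.mul_rpow hN0.le hN0'.le]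
    have h3 : (2:ℝ) ^ (1 - ε) ≤ 2 := by
      calc (2:ℝ) ^ (1 - ε) ≤ 2 ^ (1:ℝ) :=
            Real.rpow_le_rpow_of_exponent_le (by norm_num) (by linarith)
        _ = 2 := Real.rpow_one 2
    have h4 : |t * ρ g x - t * ρ g' x| ^ ε ≤ |t| ^ ε * (M ^ ε * (N ^ ε * N' ^ ε)) :=
      h1.trans_eq (by rw [h2])
    calc 2 ^ (1 - ε) * |t * ρ g x - t * ρ g' x| ^ ε * B
        ≤ 2 ^ (1 - ε) * (|t| ^ ε * (M ^ ε * (N ^ ε * N' ^ ε))) * B :=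
          mul_le_mul_of_nonneg_right (mul_le_mul_of_nonneg_left h4 (by positivity)) hBnn
      _ ≤ 2 * (|t| ^ ε * (M ^ ε * (N ^ ε * N' ^ ε))) * B := by
          have : (0:ℝ) ≤ |t| ^ ε * (M ^ ε * (N ^ ε * N' ^ ε)) := by positivity
          exact mul_le_mul_of_nonneg_right (mul_le_mul_of_nonneg_right h3 this) hBnn
      _ = 2 * |t| ^ ε * (M ^ ε * (N ^ ε * N' ^ ε)) * B := by ring
  have hθ0 : 0 < N' ^ θ := Real.rpow_pos_of_pos hN0' _
  have hXD : 2 * |t| ^ ε * (M ^ ε * (N ^ ε * N' ^ ε)) * B / D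
      ≤ 2 * |t| ^ ε * (B / N' ^ θ) := by
    rw [mul_div_assoc', div_le_div_iff₀ hD0 hθ0]
    have e1 : N ^ ε ≤ N ^ β :=
      Real.rpow_le_rpow_of_exponent_le hN1 (by rw [hβ]; linarith)
    have e2 : N' ^ ε * N' ^ θ ≤ N' ^ β := by
      rw [← Real.rpow_add hN0']
      exact Real.rpow_le_rpow_of_exponent_le hN1' (by rw [hθ, hβ]; linarith)
    have h12 : N ^ ε * (N' ^ ε * N' ^ θ) ≤ N ^ β * N' ^ β :=
      mul_le_mul e1 e2 (by positivity) (by positivity)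
    calc 2 * |t| ^ ε * (M ^ ε * (N ^ ε * N' ^ ε)) * B * N' ^ θ
        = (2 * |t| ^ ε * B * M ^ ε) * (N ^ ε * (N' ^ ε * N' ^ θ)) := by ring
      _ ≤ (2 * |t| ^ ε * B * M ^ ε) * (N ^ β * N' ^ β) :=
          mul_le_mul_of_nonneg_left h12 (by positivity)
      _ = 2 * |t| ^ ε * B * D := by rw [hDdef]; ring
  have R : ‖Complex.exp (Complex.I * (t * ρ g x)) * h g x
        - Complex.exp (Complex.I * (t * ρ g' x)) * h g' x‖ / D
      ≤ A / D + 2 * |t| ^ ε * (B / N' ^ θ) := by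
    calc ‖Complex.exp (Complex.I * (t * ρ g x)) * h g x
          - Complex.exp (Complex.I * (t * ρ g' x)) * h g' x‖ / D
        ≤ (A + 2 * |t| ^ ε * (M ^ ε * (N ^ ε * N' ^ ε)) * B) / D := by
          gcongr
          exact habs.trans (add_le_add_right hX A)
      _ = A / D + 2 * |t| ^ ε * (M ^ ε * (N ^ ε * N' ^ ε)) * B / D := add_div _ _ _
      _ ≤ A / D + 2 * |t| ^ ε * (B / N' ^ θ) := add_le_add_right hXD _
  calc ENNReal.ofReal (‖Complex.exp (Complex.I * (t * ρ g x)) * h g x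
        - Complex.exp (Complex.I * (t * ρ g' x)) * h g' x‖ / D)
      ≤ ENNReal.ofReal (A / D + 2 * |t| ^ ε * (B / N' ^ θ)) := ENNReal.ofReal_le_ofReal R
    _ = ENNReal.ofReal (A / D) + ENNReal.ofReal (2 * |t| ^ ε * (B / N' ^ θ)) :=
        ENNReal.ofReal_add (by positivity) (by positivity)
    _ ≤ kG ε β h + ENNReal.ofReal (2 * |t| ^ ε) * nθ θ h := by
        gcongr
        · exact le_iSup_of_le g (le_iSup_of_le g' (le_iSup_of_le hgg (le_iSup_of_le x le_rfl)))
        · rw [ENNReal.ofReal_mul (by positivity)]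
          gcongr
          exact le_iSup_of_le g' (le_iSup_of_le x le_rfl)

end KGbound

/-- With `ε = δ₀/8`, `θ = 3ε`, `α = 5ε`, `β = 7ε` (as in the paper we may assume
`δ₀ ≤ 8/3` without loss of generality), for every `h` in the Banach space `B`
(continuous with `‖h‖_B < ∞`) and every `t ∈ ℝ`, the function `e^{itρ} h` belongs to `B`
and `‖e^{itρ} h‖_B ≤ ‖h‖_B + 4|t|^ε |h|_θ`. -/
theorem normB_exp_smul_le
    {d : ℕ} (δ₀ ε θ α β : ℝ) (hδ₀ : 0 < δ₀) (hδ₀' : δ₀ ≤ 8 / 3)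
    (hε : ε = δ₀ / 8) (hθ : θ = 3 * ε) (hα : α = 5 * ε) (hβ : β = 7 * ε)
    (h : Gd d → ℙ ℝ (E d) → ℂ)
    (hcont : Continuous fun p : Gd d × ℙ ℝ (E d) => h p.1 p.2)
    (hfin : normB θ ε α β h ≠ ⊤) (t : ℝ) :
    normB θ ε α β (fun g x => Complex.exp (Complex.I * (t * ρ g x)) * h g x) ≠ ⊤ ∧
    normB θ ε α β (fun g x => Complex.exp (Complex.I * (t * ρ g x)) * h g x)
      ≤ normB θ ε α β h + ENNReal.ofReal (4 * |t| ^ ε) * nθ θ h := by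
  have hε0 : 0 < ε := by rw [hε]; linarith
  have hε1 : ε ≤ 1 := by rw [hε]; linarith
  have h1 : nθ θ (fun g x => Complex.exp (Complex.I * (t * ρ g x)) * h g x) = nθ θ h :=
    nθ_exp θ t h
  have h2 := kP_exp_le ε θ α t hε0 hε1 hθ hα h
  have h3 := kG_exp_le ε θ β t hε0 hε1 hθ hβ h
  have hC : ENNReal.ofReal (4 * |t| ^ ε)
      = ENNReal.ofReal (2 * |t| ^ ε) + ENNReal.ofReal (2 * |t| ^ ε) := by
    rw [← ENNReal.ofReal_add (by positivity) (by positivity)]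
    ring_nf
  have main : normB θ ε α β (fun g x => Complex.exp (Complex.I * (t * ρ g x)) * h g x)
      ≤ normB θ ε α β h + ENNReal.ofReal (4 * |t| ^ ε) * nθ θ h := by
    unfold normB
    rw [h1, hC, add_mul]
    calc nθ θ h + kP ε α (fun g x => Complex.exp (Complex.I * (t * ρ g x)) * h g x)
          + kG ε β (fun g x => Complex.exp (Complex.I * (t * ρ g x)) * h g x)
        ≤ nθ θ h + (kP ε α h + ENNReal.ofReal (2 * |t| ^ ε) * nθ θ h)
          + (kG ε β h + ENNReal.ofReal (2 * |t| ^ ε) * nθ θ h) :=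
          add_le_add (add_le_add le_rfl h2) h3
      _ = nθ θ h + kP ε α h + kG ε β h
          + (ENNReal.ofReal (2 * |t| ^ ε) * nθ θ h
            + ENNReal.ofReal (2 * |t| ^ ε) * nθ θ h) := by ring
  refine ⟨?_, main⟩
  have hnθ : nθ θ h ≠ ⊤ := by
    have hle : nθ θ h ≤ normB θ ε α β h := le_self_add.trans le_self_add
    exact (hle.trans_lt (lt_top_iff_ne_top.mpr hfin)).ne
  exact ne_top_of_le_ne_top
    (ENNReal.add_ne_top.mpr ⟨hfin, ENNReal.mul_ne_top ENNReal.ofReal_ne_top hnθ⟩) main
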